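/- arXiv:2008.11074 — 2 statements merged into one kernel-verified Lean document; each statement's English description precedes it below -/
import Mathlib

section
/- Let $(M,\pi)$ be a Poisson manifold and $V$ a vector field on $M$. The twisted Koszul–Brylinski operator $\delta = [\iota_\pi, d] + \iota_V$ on differential forms satisfies $\delta^2 = 0$ if and only if $V$ is a Poisson vector field, i.e. $[V,\pi]=0$. -/
/-!  STATEMENT 0.
Abstract model: `Ω` is the space of differential forms on `M`, `W` the space of
multivector fields, `ι : W → End Ω` the interior product, `d` the exterior derivative.
`π` is a Poisson bivector (encoded by `δ_KB² = 0`, i.e. `[π,π] = 0` via Cartan's formula),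
`V` a vector field and `bVπ = [V,π]` its Schouten bracket with `π`.  Cartan's formula
`ι_{[π,V]} = [[ι_π,d],ι_V]` (a graded anticommutator, since both operators are odd)
is a hypothesis.  The twisted Koszul–Brylinski operator `δ = [ι_π,d] + ι_V`
satisfies `δ² = 0` iff `V` is a Poisson vector field, i.e. `[V,π] = 0`. -/
theorem twisted_KB_squares_to_zero_iff_poisson_vector_field
    {Ω W : Type*} [AddCommGroup Ω] [Module ℝ Ω] [AddCommGroup W] [Module ℝ W]
    (ι : W →ₗ[ℝ] Module.End ℝ Ω) (hι : Function.Injective ι)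
    (d : Module.End ℝ Ω)
    (π V bVπ : W)
    -- integrability of π : the Koszul–Brylinski differential δ_KB = [ι_π, d] squares to zero
    (hKB : (ι π * d - d * ι π) * (ι π * d - d * ι π) = 0)
    -- interior product with a vector field squares to zero
    (hV2 : ι V * ι V = 0)
    -- Cartan's formula ι_{[π,V]} = [[ι_π,d], ι_V] (graded commutator = anticommutator)
    (hCartan : ι bVπ =
      (ι π * d - d * ι π) * ι V + ι V * (ι π * d - d * ι π)) :
    ((ι π * d - d * ι π + ι V) * (ι π * d - d * ι π + ι V) = 0) ↔ bVπ = 0 := by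
  have key : (ι π * d - d * ι π + ι V) * (ι π * d - d * ι π + ι V) = ι bVπ := by
    rw [hCartan]
    linear_combination (norm := noncomm_ring) hKB + hV2
  rw [key]
  constructor
  · intro h
    exact hι (by rw [h, map_zero])
  · intro h
    rw [h, map_zero]
end

section
/- Let $(M,\pi)$ be a Poisson manifold with volume form $\mu$ and $V = \pi^\sharp(\delta_{\pi,\mu}\beta)$ for a 2-form $\beta$. Then $[V,\pi] = \pi(d\,\delta_{\pi,\mu}\beta)\,\pi - \tfrac{1}{2}\,\pi\wedge\pi(d\,\delta_{\pi,\mu}\beta,\cdot)$, where $\pi(\gamma)$ for a 2-form $\gamma$ denotes the full contraction $\iota_\pi\gamma$ and $\pi\wedge\pi(\gamma,\cdot)$ denotes the 2-vector obtained by contracting $\pi\wedge\pi$ with $\gamma$. -/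
/-!  STATEMENT 8.
Abstract model: `R` the ring of smooth functions, `W` the `R`-algebra of multivector
fields (wedge = `*`), `sb` the Schouten–Nijenhuis bracket, `π` the Poisson bivector
(`[π,π] = 0`).  For the fixed 1-form `a = δ_{π,μ} β` (with `β` a 2-form and `δ_{π,μ}`
the twisted Koszul–Brylinski differential): `ca : W → W` is contraction with `a` in the
first slot (so `V = ca π = π^♯(δ_{π,μ}β)`), `cda : W → W` is contraction with the
2-form `d(δ_{π,μ}β)` (sending `π ∧ π` to a bivector, i.e. `π∧π(d δ_{π,μ}β, ·)`), and
`fda : W → R` is the full contraction of a bivector with `d(δ_{π,μ}β)` (so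
`fda π = π(d δ_{π,μ}β)`).  The Schouten identity of Statement 7 is hypothesis `hid`.
Claim: `[V, π] = π(d δ_{π,μ}β)·π − (1/2)·(π∧π)(d δ_{π,μ}β, ·)`. -/
theorem bracket_of_hamiltonian_flow_field_with_poisson_tensor
    {R W : Type*} [CommRing R] [Algebra ℝ R] [Ring W] [Algebra R W]
    [Module ℝ W] [IsScalarTower ℝ R W]
    (sb : W →ₗ[ℝ] W →ₗ[ℝ] W)
    (ca cda : W →ₗ[ℝ] W) (fda : W →ₗ[ℝ] R)
    (π : W)
    (hπ : sb π π = 0)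
    (hid : ∀ P Q : W, ca (sb P Q) =
      - sb (ca P) Q - sb (ca Q) P - cda (P * Q) + fda P • Q + fda Q • P) :
    sb (ca π) π = fda π • π - ((1 : ℝ) / 2) • cda (π * π) := by
  have h := hid π π
  rw [hπ, map_zero] at h
  have h2 : sb (ca π) π + sb (ca π) π
      = (fda π • π + fda π • π) - cda (π * π) := by
    linear_combination (norm := abel) h
  calc sb (ca π) π = ((1 : ℝ) / 2) • (sb (ca π) π + sb (ca π) π) := by
        rw [← two_smul ℝ, smul_smul]; norm_num
    _ = ((1 : ℝ) / 2) • (fda π • π + fda π • π - cda (π * π)) := by rw [h2]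
    _ = fda π • π - ((1 : ℝ) / 2) • cda (π * π) := by
        rw [← two_smul ℝ (fda π • π), smul_sub, smul_smul]; norm_num
end
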